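/- Let C be a bounded linear operator on a complex Hilbert space H, and let S be the operator on H ⊕ H given by the 2×2 operator matrix with zero diagonal entries and both off-diagonal entries equal to C. Then w(S) = w(C), where w denotes the numerical radius. -/

import Mathlib

/-- The numerical radius of a bounded linear operator. -/
noncomputable def numRadius {E : Type*} [NormedAddCommGroup E] [InnerProductSpace ℂ E]
    (T : E →L[ℂ] E) : ℝ :=
  ⨆ x : {x : E // ‖x‖ = 1}, ‖(inner ℂ (T x.val) x.val : ℂ)‖

/-- The 2×2 operator matrix `[[0, C],[D, 0]]` acting on `H ⊕ H` (as `WithLp 2 (H × H)`)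
by `(x, y) ↦ (C y, D x)`. -/
noncomputable def offDiagOp {H : Type*} [NormedAddCommGroup H] [InnerProductSpace ℂ H]
    (C D : H →L[ℂ] H) : WithLp 2 (H × H) →L[ℂ] WithLp 2 (H × H) :=
  ((WithLp.prodContinuousLinearEquiv 2 ℂ H H).symm : (H × H) →L[ℂ] WithLp 2 (H × H)) ∘L
    ((C ∘L ContinuousLinearMap.snd ℂ H H).prod (D ∘L ContinuousLinearMap.fst ℂ H H)) ∘L
    ((WithLp.prodContinuousLinearEquiv 2 ℂ H H) : WithLp 2 (H × H) →L[ℂ] (H × H))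

section aux

variable {E : Type*} [NormedAddCommGroup E] [InnerProductSpace ℂ E]

lemma numRadius_bddAbove (T : E →L[ℂ] E) :
    BddAbove (Set.range fun x : {x : E // ‖x‖ = 1} => ‖(inner ℂ (T x.val) x.val : ℂ)‖) := by
  refine ⟨‖T‖, ?_⟩
  rintro r ⟨x, rfl⟩
  calc ‖(inner ℂ (T x.val) x.val : ℂ)‖ ≤ ‖T x.val‖ * ‖x.val‖ := norm_inner_le_norm _ _
    _ ≤ ‖T‖ * ‖x.val‖ * ‖x.val‖ := by
        gcongr; exact T.le_opNorm _
    _ ≤ ‖T‖ := by rw [x.2]; simp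

lemma numRadius_nonneg (T : E →L[ℂ] E) : 0 ≤ numRadius T :=
  Real.iSup_nonneg fun _ => norm_nonneg _

lemma le_numRadius (T : E →L[ℂ] E) (x : E) (hx : ‖x‖ = 1) :
    ‖(inner ℂ (T x) x : ℂ)‖ ≤ numRadius T :=
  le_ciSup (numRadius_bddAbove T) (⟨x, hx⟩ : {x : E // ‖x‖ = 1})

lemma inner_le_numRadius (T : E →L[ℂ] E) (u : E) :
    ‖(inner ℂ (T u) u : ℂ)‖ ≤ numRadius T * ‖u‖ ^ 2 := by
  rcases eq_or_ne u 0 with rfl | hu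
  · simp
  · have hn : ‖u‖ ≠ 0 := norm_ne_zero_iff.mpr hu
    set v : E := (‖u‖⁻¹ : ℂ) • u with hv
    have hvn : ‖v‖ = 1 := by
      rw [hv, norm_smul]
      simp [hn]
    have hin : (inner ℂ (T v) v : ℂ) = (‖u‖⁻¹ : ℂ) ^ 2 * inner ℂ (T u) u := by
      rw [hv, map_smul, inner_smul_left, inner_smul_right]
      have : (starRingEnd ℂ) (‖u‖⁻¹ : ℂ) = (‖u‖⁻¹ : ℂ) := by
        simp [Complex.conj_ofReal]
      rw [this]; ring
    have h1 := le_numRadius T v hvn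
    rw [hin, norm_mul] at h1
    have h2 : ‖((‖u‖⁻¹ : ℂ)) ^ 2‖ = (‖u‖ ^ 2)⁻¹ := by
      simp [norm_pow]
    rw [h2] at h1
    have hsq : (0 : ℝ) < ‖u‖ ^ 2 := by positivity
    calc ‖(inner ℂ (T u) u : ℂ)‖ = (‖u‖ ^ 2)⁻¹ * ‖(inner ℂ (T u) u : ℂ)‖ * ‖u‖ ^ 2 := by
          field_simp
      _ ≤ numRadius T * ‖u‖ ^ 2 := by
          gcongr

end aux

theorem stmt_14 {H : Type*} [NormedAddCommGroup H] [InnerProductSpace ℂ H] [CompleteSpace H]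
    (C : H →L[ℂ] H) :
    numRadius (offDiagOp C C) = numRadius C := by
  rcases subsingleton_or_nontrivial H with hs | hnt
  · have h1 : IsEmpty {x : H // ‖x‖ = 1} := by
      constructor; rintro ⟨x, hx⟩
      rw [Subsingleton.elim x 0] at hx; simp at hx
    have h2 : IsEmpty {z : WithLp 2 (H × H) // ‖z‖ = 1} := by
      have : Subsingleton (WithLp 2 (H × H)) := by
        exact (WithLp.equiv 2 (H × H)).subsingleton
      constructor; rintro ⟨z, hz⟩
      rw [Subsingleton.elim z 0] at hz; simp at hz
    rw [numRadius, numRadius, iSup_of_empty', iSup_of_empty', Real.sSup_empty]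
  · set S := offDiagOp C C with hS
    have key : ∀ z : WithLp 2 (H × H),
        (inner ℂ (S z) z : ℂ) = inner ℂ (C z.snd) z.fst + inner ℂ (C z.fst) z.snd := fun z => rfl
    apply le_antisymm
    · -- numRadius S ≤ numRadius C
      have : Nonempty {z : WithLp 2 (H × H) // ‖z‖ = 1} := by
        obtain ⟨x, hx⟩ := exists_ne (0 : H)
        refine ⟨⟨(WithLp.equiv 2 (H × H)).symm ((‖x‖⁻¹ : ℂ) • x, 0), ?_⟩⟩
        erw [WithLp.norm_toLp_fst, norm_smul]
        simp [norm_ne_zero_iff.mpr hx]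
      refine ciSup_le fun z => ?_
      rw [key]
      set x := (z.val).fst
      set y := (z.val).snd
      have hnorm : ‖x‖ ^ 2 + ‖y‖ ^ 2 = 1 := by
        have := WithLp.prod_norm_sq_eq_of_L2 (z.val)
        rw [z.2] at this; simpa using this.symm
      -- polarization-style identity
      have hid : (2 : ℂ) * (inner ℂ (C y) x + inner ℂ (C x) y) =
          inner ℂ (C (x + y)) (x + y) - inner ℂ (C (x - y)) (x - y) := by
        simp only [map_add, map_sub, inner_add_left, inner_add_right, inner_sub_left,
          inner_sub_right]
        ring
      have h1 := inner_le_numRadius C (x + y)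
      have h2 := inner_le_numRadius C (x - y)
      have hpar : ‖x + y‖ ^ 2 + ‖x - y‖ ^ 2 = 2 := by
        have := parallelogram_law_with_norm ℂ x y
        nlinarith [hnorm]
      have : (2 : ℝ) * ‖(inner ℂ (C y) x + inner ℂ (C x) y : ℂ)‖ ≤ 2 * numRadius C := by
        calc (2 : ℝ) * ‖(inner ℂ (C y) x + inner ℂ (C x) y : ℂ)‖
            = ‖(2 : ℂ) * (inner ℂ (C y) x + inner ℂ (C x) y)‖ := by
              rw [norm_mul]; simp
          _ = ‖(inner ℂ (C (x + y)) (x + y) - inner ℂ (C (x - y)) (x - y) : ℂ)‖ := by rw [hid]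
          _ ≤ ‖(inner ℂ (C (x + y)) (x + y) : ℂ)‖ + ‖(inner ℂ (C (x - y)) (x - y) : ℂ)‖ :=
              norm_sub_le _ _
          _ ≤ numRadius C * ‖x + y‖ ^ 2 + numRadius C * ‖x - y‖ ^ 2 := add_le_add h1 h2
          _ = 2 * numRadius C := by rw [← mul_add, hpar]; ring
      linarith
    · -- numRadius C ≤ numRadius S
      have : Nonempty {x : H // ‖x‖ = 1} := by
        obtain ⟨x, hx⟩ := exists_ne (0 : H)
        exact ⟨⟨(‖x‖⁻¹ : ℂ) • x, by rw [norm_smul]; simp [norm_ne_zero_iff.mpr hx]⟩⟩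
      refine ciSup_le fun x => ?_
      set c : ℂ := (((Real.sqrt 2)⁻¹ : ℝ) : ℂ)
      have hs2 : Real.sqrt 2 ≠ 0 := by positivity
      set w : WithLp 2 (H × H) := (WithLp.equiv 2 (H × H)).symm (x.val, x.val) with hw
      have hwfst : w.fst = x.val := rfl
      have hwsnd : w.snd = x.val := rfl
      have hwn : ‖w‖ = Real.sqrt 2 := by
        have h := WithLp.prod_norm_sq_eq_of_L2 w
        rw [hwfst, hwsnd, x.2] at h
        have : ‖w‖ ^ 2 = 2 := by rw [h]; norm_num
        rw [← this, Real.sqrt_sq (norm_nonneg w)]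
      set z : WithLp 2 (H × H) := c • w with hz
      have hcn : ‖c‖ = (Real.sqrt 2)⁻¹ := by
        simp only [c, Complex.norm_real, Real.norm_eq_abs]
        rw [abs_of_nonneg (by positivity)]
      have hzn : ‖z‖ = 1 := by
        rw [hz, norm_smul, hwn, hcn]
        field_simp
      have hcc : c * c = 1 / 2 := by
        have h : (Real.sqrt 2)⁻¹ * (Real.sqrt 2)⁻¹ = 1 / 2 := by
          rw [← mul_inv, Real.mul_self_sqrt (by norm_num : (0:ℝ) ≤ 2)]
          norm_num
        simp only [c]
        rw [← Complex.ofReal_mul, h]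
        push_cast
        norm_num
      have hinner : (inner ℂ (S z) z : ℂ) = inner ℂ (C x.val) x.val := by
        have hc : (starRingEnd ℂ) c = c := by simp [c, Complex.conj_ofReal]
        rw [hz, map_smul, inner_smul_left, inner_smul_right, key, hwfst, hwsnd, hc]
        linear_combination (2 * (inner ℂ (C x.val) x.val : ℂ)) * hcc
      calc ‖(inner ℂ (C x.val) x.val : ℂ)‖ = ‖(inner ℂ (S z) z : ℂ)‖ := by rw [hinner]
        _ ≤ numRadius S := le_numRadius S z hzn
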